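/- There exist λ > 0 and a vector π : {0,...,N} → ℝ with π(x) > 0 for 0 ≤ x ≤ N-1, Σ_{x=0}^{N-1} π(x) = 1, π(N) = -1, and G†π = -λπ, where G† is the transpose of G. -/

import Mathlib

open Matrix Polynomial Finset

/-- Generator of a birth-and-death chain on `{0,...,N}`:
`Gf(x) = b_{x+1}(f(x+1)-f(x)) + d_x(f(x-1)-f(x))`, with the conventions
`b_{N+1} = 0` (built in via the `if x < N` in the diagonal term; there is no
state `N+1`) and `d 0 = 0` (imposed as a hypothesis in the theorems). -/
def bdGen (N : ℕ) (b d : ℕ → ℝ) : Matrix (Fin (N+1)) (Fin (N+1)) ℝ :=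
  Matrix.of fun x y =>
    if (y : ℕ) = (x : ℕ) + 1 then b ((x : ℕ) + 1)
    else if (y : ℕ) + 1 = (x : ℕ) then d (x : ℕ)
    else if y = x then -((if (x : ℕ) < N then b ((x : ℕ) + 1) else 0) + d (x : ℕ))
    else 0

section BDaux


private noncomputable def pseq (b d : ℕ → ℝ) : ℕ → ℝ → ℝ
  | 0 => fun _ => (1:ℝ)
  | 1 => fun l => (b 1 - l) / d 1
  | (x+2) => fun l =>
      ((b (x+2) + d (x+1) - l) * pseq b d (x+1) l - b (x+1) * pseq b d x l) / d (x+2)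

private noncomputable def fB (N : ℕ) (b d : ℕ → ℝ) (l : ℝ) : ℝ :=
  (if 2 ≤ N then b (N-1) * pseq b d (N-2) l else 0)
    - (b N + d (N-1) - l) * pseq b d (N-1) l

private lemma pseq_cont (b d : ℕ → ℝ) : ∀ x, Continuous (pseq b d x) := by
  intro x
  induction x using Nat.strong_induction_on with
  | _ x ih =>
    match x with
    | 0 => simp only [pseq]; exact continuous_const
    | 1 => simp only [pseq]; fun_prop
    | (x+2) =>
      have h1 := ih (x+1) (by omega)
      have h0 := ih x (by omega)
      simp only [pseq]; fun_prop

private lemma fB_cont (N : ℕ) (b d : ℕ → ℝ) : Continuous (fB N b d) := by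
  unfold fB
  have h1 := pseq_cont b d (N-2)
  have h2 := pseq_cont b d (N-1)
  rcases Nat.lt_or_ge N 2 with h | h
  · simp only [if_neg (by omega : ¬ 2 ≤ N)]
    fun_prop
  · simp only [if_pos h]
    fun_prop

private lemma flux (N : ℕ) (b d : ℕ → ℝ) (hd : ∀ x, 1 ≤ x → x ≤ N - 1 → 0 < d x) (l : ℝ) :
    ∀ n, n + 2 ≤ N →
      d (n+1) * pseq b d (n+1) l - b (n+1) * pseq b d n l
        = -l * ∑ x ∈ Finset.range (n+1), pseq b d x l := by
  intro n
  induction n with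
  | zero =>
    intro h
    have hd1 : d 1 ≠ 0 := ne_of_gt (hd 1 le_rfl (by omega))
    show d 1 * pseq b d 1 l - b 1 * pseq b d 0 l = -l * ∑ x ∈ Finset.range 1, pseq b d x l
    simp only [pseq, Finset.sum_range_one]
    field_simp
    ring
  | succ n ih =>
    intro h
    have hdn : d (n+2) ≠ 0 := ne_of_gt (hd (n+2) (by omega) (by omega))
    have hih := ih (by omega)
    rw [Finset.sum_range_succ]
    have hexp : pseq b d (n+2) l =
        ((b (n+2) + d (n+1) - l) * pseq b d (n+1) l - b (n+1) * pseq b d n l) / d (n+2) := rfl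
    rw [hexp, mul_div_cancel₀ _ hdn]
    linear_combination hih

private lemma pos0 (N : ℕ) (b d : ℕ → ℝ)
    (hb : ∀ x, 1 ≤ x → x ≤ N → 0 < b x)
    (hd : ∀ x, 1 ≤ x → x ≤ N - 1 → 0 < d x) :
    ∀ x, x + 1 ≤ N → 0 < pseq b d x 0 := by
  intro x
  induction x with
  | zero => intro _; norm_num [pseq]
  | succ x ih =>
    intro h
    have hx := ih (by omega)
    have hfl := flux N b d hd 0 x (by omega)
    have hdx : 0 < d (x+1) := hd (x+1) (by omega) (by omega)
    have hbx : 0 < b (x+1) := hb (x+1) (by omega) (by omega)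
    have : d (x+1) * pseq b d (x+1) 0 = b (x+1) * pseq b d x 0 := by linarith [hfl]
    nlinarith

private lemma fB0_neg (N : ℕ) (b d : ℕ → ℝ) (hN : 1 ≤ N)
    (hb : ∀ x, 1 ≤ x → x ≤ N → 0 < b x)
    (hd : ∀ x, 1 ≤ x → x ≤ N - 1 → 0 < d x)
    (hd0 : d 0 = 0) :
    fB N b d 0 < 0 := by
  rcases Nat.lt_or_ge N 2 with h2 | h2
  · -- N = 1
    have hN1 : N = 1 := by omega
    subst hN1
    have hb1 : 0 < b 1 := hb 1 le_rfl le_rfl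
    simp [fB, pseq, hd0]
    linarith
  · obtain ⟨M, rfl⟩ : ∃ M, N = M + 2 := ⟨N - 2, by omega⟩
    have hfl := flux (M+2) b d hd 0 M (by omega)
    have hpM1 : 0 < pseq b d (M+1) 0 := pos0 _ b d hb hd (M+1) (by omega)
    have hpM : 0 < pseq b d M 0 := pos0 _ b d hb hd M (by omega)
    have hbN : 0 < b (M+2) := hb (M+2) (by omega) (by omega)
    have hdd : 0 < d (M+1) := hd (M+1) (by omega) (by omega)
    have hbal : d (M+1) * pseq b d (M+1) 0 = b (M+1) * pseq b d M 0 := by linarith [hfl]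
    have : fB (M+2) b d 0 =
        b (M+1) * pseq b d M 0 - (b (M+2) + d (M+1)) * pseq b d (M+1) 0 := by
      simp [fB]
    rw [this, ← hbal]
    nlinarith


private lemma exists_lam (N : ℕ) (hN : 1 ≤ N) (b d : ℕ → ℝ)
    (hb : ∀ x, 1 ≤ x → x ≤ N → 0 < b x)
    (hd : ∀ x, 1 ≤ x → x ≤ N - 1 → 0 < d x)
    (hd0 : d 0 = 0) :
    ∃ lam : ℝ, 0 < lam ∧ (∀ x, x + 1 ≤ N → 0 < pseq b d x lam) ∧ fB N b d lam = 0 := by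
  classical
  set p := pseq b d with hp
  set f := fB N b d with hf
  set U : Set ℝ :=
    (⋂ x ∈ Finset.Icc 1 (N-1), {l : ℝ | 0 < p x l}) ∩ {l : ℝ | f l < 0} with hUdef
  have hmemU : ∀ l : ℝ, l ∈ U ↔ ((∀ x, 1 ≤ x → x + 1 ≤ N → 0 < p x l) ∧ f l < 0) := by
    intro l
    simp only [hUdef, Set.mem_inter_iff, Set.mem_iInter, Finset.mem_Icc, Set.mem_setOf_eq]
    constructor
    · rintro ⟨h1, h2⟩
      exact ⟨fun x hx1 hx2 => h1 x ⟨hx1, by omega⟩, h2⟩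
    · rintro ⟨h1, h2⟩
      exact ⟨fun x hx => h1 x hx.1 (by omega), h2⟩
  have hUopen : IsOpen U := by
    apply IsOpen.inter
    · exact isOpen_biInter_finset fun x _ => isOpen_lt continuous_const (pseq_cont b d x)
    · exact isOpen_lt (fB_cont N b d) continuous_const
  have h0U : (0:ℝ) ∈ U := by
    rw [hmemU]
    exact ⟨fun x hx1 hx2 => pos0 N b d hb hd x hx2, fB0_neg N b d hN hb hd hd0⟩
  set T : Set ℝ := {t : ℝ | 0 ≤ t ∧ Set.Icc 0 t ⊆ U} with hTdef
  have hT0 : (0:ℝ) ∈ T := ⟨le_rfl, by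
    intro s hs
    have : s = 0 := le_antisymm hs.2 hs.1
    rwa [this]⟩
  have hb1 : 0 < b 1 := hb 1 le_rfl hN
  have hTb : ∀ t ∈ T, t < b 1 := by
    intro t ht
    by_contra hcon
    push_neg at hcon
    have hmem : b 1 ∈ U := ht.2 ⟨le_of_lt hb1, hcon⟩
    rw [hmemU] at hmem
    rcases Nat.lt_or_ge N 2 with h2 | h2
    · have hN1 : N = 1 := by omega
      have : f (b 1) < 0 := hmem.2
      rw [hf, hN1] at this
      simp [fB, pseq, hd0] at this
    · have := hmem.1 1 le_rfl (by omega)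
      have hd1 : 0 < d 1 := hd 1 le_rfl (by omega)
      rw [hp] at this
      simp only [pseq] at this
      rw [lt_div_iff₀ hd1] at this
      linarith
  have hbdd : BddAbove T := ⟨b 1, fun t ht => (hTb t ht).le⟩
  set lam := sSup T with hlam
  have hTne : T.Nonempty := ⟨0, hT0⟩
  -- lam > 0
  obtain ⟨ε, hε, hball⟩ := Metric.isOpen_iff.mp hUopen 0 h0U
  have hhalf : ε/2 ∈ T := by
    refine ⟨by positivity, fun s hs => hball ?_⟩
    rw [Metric.mem_ball, Real.dist_eq, sub_zero, abs_of_nonneg hs.1]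
    have := hs.2
    linarith
  have hlam_pos : 0 < lam := lt_of_lt_of_le (by positivity) (le_csSup hbdd hhalf)
  have hgood_lt : ∀ s : ℝ, 0 ≤ s → s < lam → s ∈ U := by
    intro s hs0 hslt
    obtain ⟨t, htT, hst⟩ := exists_lt_of_lt_csSup hTne hslt
    exact htT.2 ⟨hs0, hst.le⟩
  -- nonneg limits
  have hev : Set.Ioo 0 lam ∈ nhdsWithin lam (Set.Iio lam) :=
    Ioo_mem_nhdsLT_of_mem ⟨hlam_pos, le_rfl⟩
  have hp_nonneg : ∀ x, 1 ≤ x → x + 1 ≤ N → 0 ≤ p x lam := by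
    intro x hx1 hx2
    have htend : Filter.Tendsto (p x) (nhdsWithin lam (Set.Iio lam)) (nhds (p x lam)) :=
      ((pseq_cont b d x).tendsto lam).mono_left nhdsWithin_le_nhds
    refine ge_of_tendsto htend ?_
    filter_upwards [hev] with s hs
    exact le_of_lt (((hmemU s).mp (hgood_lt s hs.1.le hs.2)).1 x hx1 hx2)
  have hf_nonpos : f lam ≤ 0 := by
    have htend : Filter.Tendsto f (nhdsWithin lam (Set.Iio lam)) (nhds (f lam)) :=
      ((fB_cont N b d).tendsto lam).mono_left nhdsWithin_le_nhds
    refine le_of_tendsto htend ?_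
    filter_upwards [hev] with s hs
    exact le_of_lt ((hmemU s).mp (hgood_lt s hs.1.le hs.2)).2
  have hlam_notU : lam ∉ U := by
    intro hmem
    obtain ⟨ε', hε', hball'⟩ := Metric.isOpen_iff.mp hUopen lam hmem
    have hT' : lam + ε'/2 ∈ T := by
      refine ⟨by linarith, fun s hs => ?_⟩
      rcases lt_or_ge s lam with h | h
      · exact hgood_lt s hs.1 h
      · apply hball'
        rw [Metric.mem_ball, Real.dist_eq, abs_of_nonneg (by linarith)]
        have := hs.2
        linarith
    have := le_csSup hbdd hT'
    linarith
  -- all p x lam > 0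
  have hpall : ∀ x, x + 1 ≤ N → 0 < p x lam := by
    by_contra hcon
    push_neg at hcon
    have hex : ∃ k, k + 1 ≤ N ∧ p k lam ≤ 0 := by
      obtain ⟨x, hx1, hx2⟩ := hcon
      exact ⟨x, hx1, hx2⟩
    classical
    obtain ⟨k, ⟨hkN, hkle⟩, hmin⟩ :
        ∃ k, (k + 1 ≤ N ∧ p k lam ≤ 0) ∧ ∀ m, m < k → ¬(m + 1 ≤ N ∧ p m lam ≤ 0) :=
      ⟨Nat.find hex, Nat.find_spec hex, fun m hm => Nat.find_min hex hm⟩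
    have hk1 : 1 ≤ k := by
      rcases Nat.eq_zero_or_pos k with h | h
      · exfalso; rw [h] at hkle; simp [hp, pseq] at hkle; linarith
      · exact h
    have hkz : p k lam = 0 := le_antisymm hkle (hp_nonneg k hk1 hkN)
    have hkm1 : 0 < p (k-1) lam := by
      rcases Nat.eq_or_lt_of_le hk1 with h | h
      · rw [← h]; simp [hp, pseq]
      · have hmin' := hmin (k-1) (by omega)
        push_neg at hmin'
        have := hmin' (by omega)
        linarith
    obtain ⟨j, hj⟩ : ∃ j, k = j + 1 := ⟨k - 1, by omega⟩
    rcases Nat.lt_or_ge (k+1) N with hlt | hge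
    · -- k + 2 ≤ N
      have hdk : 0 < d (k+1) := hd (k+1) (by omega) (by omega)
      have hbk : 0 < b k := hb k (by omega) (by omega)
      have hnext : p (k+1) lam < 0 := by
        have hexp : p (k+1) lam =
            ((b (k+1) + d k - lam) * p k lam - b k * p (k-1) lam) / d (k+1) := by
          rw [hj]; rfl
        rw [hexp, hkz]
        apply div_neg_of_neg_of_pos _ hdk
        simp
        nlinarith
      have := hp_nonneg (k+1) (by omega) (by omega)
      linarith
    · -- k = N - 1, i.e. k + 1 = N
      have hkN' : k + 1 = N := by omega
      have h2N : 2 ≤ N := by omega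
      have hfpos : 0 < f lam := by
        have : f lam = b (N-1) * p (N-2) lam - (b N + d (N-1) - lam) * p (N-1) lam := by
          rw [hf]; unfold fB; rw [if_pos h2N]
        have hN1k : N - 1 = k := by omega
        have hN2k : N - 2 = k - 1 := by omega
        rw [this, hN1k, hN2k, hkz]
        have hbk : 0 < b k := hb k (by omega) (by omega)
        nlinarith
      linarith
  refine ⟨lam, hlam_pos, hpall, ?_⟩
  have : ¬ ((∀ x, 1 ≤ x → x + 1 ≤ N → 0 < p x lam) ∧ f lam < 0) := fun h => hlam_notU ((hmemU lam).mpr h)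
  have hge : 0 ≤ f lam := by
    by_contra hneg
    push_neg at hneg
    exact this ⟨fun x _ hx2 => hpall x hx2, hneg⟩
  exact le_antisymm hf_nonpos hge

private lemma tri_sum (N : ℕ) (b d : ℕ → ℝ) (g : ℕ → ℝ) (m : ℕ) (hm : m ≤ N) :
    ∑ i ∈ Finset.range (N+1),
      g i * (if m = i + 1 then b (i+1) else if m + 1 = i then d i
             else if m = i then -((if i < N then b (i+1) else 0) + d i) else 0)
      = (if 1 ≤ m then g (m-1) * b m else 0)
        + g m * (-((if m < N then b (m+1) else 0) + d m))
        + (if m < N then g (m+1) * d (m+1) else 0) := by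
  have hsplit : ∀ i, g i * (if m = i + 1 then b (i+1) else if m + 1 = i then d i
             else if m = i then -((if i < N then b (i+1) else 0) + d i) else 0)
      = (if m = i + 1 then g i * b (i+1) else 0)
        + (if m = i then g i * (-((if i < N then b (i+1) else 0) + d i)) else 0)
        + (if m + 1 = i then g i * d i else 0) := by
    intro i
    split_ifs <;> first | ring1 | (exfalso; omega)
  rw [Finset.sum_congr rfl (fun i _ => hsplit i)]
  rw [Finset.sum_add_distrib, Finset.sum_add_distrib]
  congr 1
  · congr 1
    · -- sub-diagonal term
      rcases Nat.eq_zero_or_pos m with hm0 | hm1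
      · rw [if_neg (by omega), Finset.sum_eq_zero]
        intro i _; rw [if_neg (by omega)]
      · rw [if_pos (show 1 ≤ m by omega)]
        rw [Finset.sum_eq_single (m-1)]
        · rw [if_pos (by omega)]
          congr 2 <;> omega
        · intro i _ hne; rw [if_neg (by omega)]
        · intro habs; exact absurd (Finset.mem_range.mpr (by omega)) habs
    · -- diagonal term
      rw [Finset.sum_eq_single m]
      · rw [if_pos rfl]
      · intro i _ hne; rw [if_neg (by omega)]
      · intro habs; exact absurd (Finset.mem_range.mpr (by omega)) habs
  · -- super-diagonal term
    rcases Nat.lt_or_ge m N with hmN | hmN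
    · rw [if_pos hmN]
      rw [Finset.sum_eq_single (m+1)]
      · rw [if_pos rfl]
      · intro i _ hne; rw [if_neg (by omega)]
      · intro habs; exact absurd (Finset.mem_range.mpr (by omega)) habs
    · rw [if_neg (by omega), Finset.sum_eq_zero]
      intro i hi; rw [if_neg (by rw [Finset.mem_range] at hi; omega)]

/-- There exist `λ > 0` and `π` with `π > 0` on `{0,...,N-1}`,
`Σ_{x<N} π(x) = 1`, `π(N) = -1` and `G†π = -λπ` (`G†` the transpose of `G`). -/
theorem stmt3 (N : ℕ) (hN : 1 ≤ N) (b d : ℕ → ℝ)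
    (hb : ∀ x, 1 ≤ x → x ≤ N → 0 < b x)
    (hd : ∀ x, 1 ≤ x → x ≤ N - 1 → 0 < d x)
    (hd0 : d 0 = 0) (hdN : d N = 0) :
    ∃ (lam : ℝ) (π : Fin (N+1) → ℝ), 0 < lam ∧
      (∀ x : Fin (N+1), (x : ℕ) < N → 0 < π x) ∧
      (∑ x ∈ Finset.univ.filter (fun x : Fin (N+1) => (x : ℕ) < N), π x) = 1 ∧
      π (Fin.last N) = -1 ∧
      Matrix.vecMul π (bdGen N b d) = -lam • π := by
  classical
  obtain ⟨lam, hlam_pos, hpall, hflam⟩ := exists_lam N hN b d hb hd hd0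
  set p : ℕ → ℝ := fun x => pseq b d x lam with hpdef
  set c : ℝ := ∑ i ∈ Finset.range N, p i with hcdef
  have hc : 0 < c := by
    apply Finset.sum_pos
    · intro i hi
      exact hpall i (by rw [Finset.mem_range] at hi; omega)
    · exact Finset.nonempty_range_iff.mpr (by omega)
  set Pn : ℕ → ℝ := fun i => if i = N then -1 else p i / c with hPdef
  set π : Fin (N+1) → ℝ := fun x => Pn (x : ℕ) with hπdef
  refine ⟨lam, π, hlam_pos, ?_, ?_, ?_, ?_⟩
  · intro x hx
    show 0 < Pn (x : ℕ)
    rw [hPdef]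
    simp only
    rw [if_neg (by omega)]
    exact div_pos (hpall _ (by omega)) hc
  · -- sum = 1
    have h1 : (∑ x ∈ Finset.univ.filter (fun x : Fin (N+1) => (x : ℕ) < N), π x)
        = ∑ x : Fin (N+1), (if (x : ℕ) < N then Pn (x : ℕ) else 0) := by
      rw [Finset.sum_filter]
    rw [h1, Fin.sum_univ_eq_sum_range (fun i => if i < N then Pn i else 0) (N+1)]
    rw [Finset.sum_range_succ, if_neg (by omega), add_zero]
    have h2 : ∀ i ∈ Finset.range N, (if i < N then Pn i else 0) = p i / c := by
      intro i hi
      rw [Finset.mem_range] at hi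
      rw [if_pos hi, hPdef]
      simp only
      rw [if_neg (by omega)]
    rw [Finset.sum_congr rfl h2, ← Finset.sum_div, ← hcdef, div_self (ne_of_gt hc)]
  · -- π last = -1
    show Pn ((Fin.last N : Fin (N+1)) : ℕ) = -1
    rw [Fin.val_last, hPdef]
    simp
  · -- eigen equation
    funext y
    have hbd : ∀ (x : Fin (N+1)), bdGen N b d x y =
        (if (y:ℕ) = (x:ℕ) + 1 then b ((x:ℕ)+1) else if (y:ℕ) + 1 = (x:ℕ) then d (x:ℕ)
         else if (y:ℕ) = (x:ℕ) then -((if (x:ℕ) < N then b ((x:ℕ)+1) else 0) + d (x:ℕ)) else 0) := by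
      intro x
      show (if (y:ℕ) = (x:ℕ) + 1 then b ((x:ℕ)+1) else if (y:ℕ) + 1 = (x:ℕ) then d (x:ℕ)
         else if y = x then -((if (x:ℕ) < N then b ((x:ℕ)+1) else 0) + d (x:ℕ)) else 0) = _
      have : (y = x) = ((y:ℕ) = (x:ℕ)) := by
        apply propext; exact ⟨fun h => by rw [h], fun h => Fin.ext h⟩
      simp only [this]
    have hvm : Matrix.vecMul π (bdGen N b d) y = ∑ x : Fin (N+1), π x * bdGen N b d x y := by
      rw [Matrix.vecMul]
      rfl
    set m : ℕ := (y : ℕ) with hmdef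
    have hmN : m ≤ N := by omega
    have hsum : Matrix.vecMul π (bdGen N b d) y
        = (if 1 ≤ m then Pn (m-1) * b m else 0)
          + Pn m * (-((if m < N then b (m+1) else 0) + d m))
          + (if m < N then Pn (m+1) * d (m+1) else 0) := by
      rw [hvm]
      rw [Finset.sum_congr rfl (fun x _ => by rw [hbd x])]
      rw [show (∑ x : Fin (N+1), π x *
          (if (y:ℕ) = (x:ℕ) + 1 then b ((x:ℕ)+1) else if (y:ℕ) + 1 = (x:ℕ) then d (x:ℕ)
           else if (y:ℕ) = (x:ℕ) then -((if (x:ℕ) < N then b ((x:ℕ)+1) else 0) + d (x:ℕ)) else 0))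
        = ∑ i ∈ Finset.range (N+1), Pn i *
          (if m = i + 1 then b (i+1) else if m + 1 = i then d i
           else if m = i then -((if i < N then b (i+1) else 0) + d i) else 0) from
        Fin.sum_univ_eq_sum_range (fun i => Pn i *
          (if m = i + 1 then b (i+1) else if m + 1 = i then d i
           else if m = i then -((if i < N then b (i+1) else 0) + d i) else 0)) (N+1)]
      exact tri_sum N b d Pn m hmN
    have hrhs : (-lam • π) y = -lam * Pn m := by
      simp [hπdef, Pi.smul_apply, smul_eq_mul, hmdef]
    rw [hsum, hrhs]
    clear hsum hrhs hvm hbd hmdef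
    clear_value m
    -- basic facts about Pn
    have hPn_ne : ∀ i, i ≠ N → Pn i = p i / c := fun i hi => by
      rw [hPdef]; simp only; rw [if_neg hi]
    have hPnN : Pn N = -1 := by rw [hPdef]; simp
    have hcne : c ≠ 0 := ne_of_gt hc
    have hp0 : p 0 = 1 := rfl
    rcases Nat.eq_zero_or_pos m with hm0 | hm1
    · -- m = 0
      subst hm0
      rw [if_neg (by omega), if_pos (by omega : 0 < N), if_pos (by omega : 0 < N)]
      rw [hPn_ne 0 (by omega), hp0]
      rcases Nat.lt_or_ge N 2 with h2 | h2
      · -- N = 1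
        have hN1 : N = 1 := by omega
        subst hN1
        have hlameq : lam = b 1 + d 0 := by
          have := hflam
          norm_num [fB, pseq] at this
          linarith
        have hPn1 : Pn (0+1) = -1 := hPnN
        rw [hPn1]
        have hc1 : c = 1 := by
          rw [hcdef]
          simp [hp0]
        have hd1 : d (0+1) = 0 := hdN
        rw [hc1, hd1, hlameq]
        ring
      · -- N ≥ 2
        have hd1 : 0 < d 1 := hd 1 le_rfl (by omega)
        rw [hPn_ne 1 (by omega)]
        have hp1 : p 1 * d 1 = b 1 - lam := by
          show (b 1 - lam) / d 1 * d 1 = b 1 - lam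
          field_simp
        field_simp
        nlinarith [hp1]
    · rcases Nat.lt_or_ge m N with hmN' | hmN'
      · -- 1 ≤ m < N
        obtain ⟨j, rfl⟩ : ∃ j, m = j + 1 := ⟨m - 1, by omega⟩
        rw [if_pos (by omega : 1 ≤ j + 1), if_pos hmN', if_pos hmN']
        simp only [Nat.add_sub_cancel]
        rw [hPn_ne j (by omega), hPn_ne (j+1) (by omega)]
        rcases Nat.lt_or_ge (j+2) N with hlt | hge
        · -- interior
          rw [hPn_ne (j+2) (by omega)]
          have hdj2 : 0 < d (j+2) := hd (j+2) (by omega) (by omega)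
          have hrec : p (j+2) * d (j+2)
              = (b (j+2) + d (j+1) - lam) * p (j+1) - b (j+1) * p j := by
            show ((b (j+2) + d (j+1) - lam) * p (j+1) - b (j+1) * p j) / d (j+2) * d (j+2) = _
            field_simp
          field_simp
          nlinarith [hrec]
        · -- m = N - 1
          have hNj : N = j + 2 := by omega
          have hdj2 : d (j+2) = 0 := by rw [hNj] at hdN; exact hdN
          have hPnj2 : Pn (j+2) = -1 := by rw [← hNj]; exact hPnN
          rw [hPnj2]
          have hfl : b (j+1) * p j - (b (j+2) + d (j+1) - lam) * p (j+1) = 0 := by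
            have := hflam
            rw [hNj] at this
            unfold fB at this
            rw [if_pos (by omega)] at this
            simpa using this
          rw [hdj2]
          field_simp
          nlinarith [hfl]
      · -- m = N
        have hmN2 : m = N := by omega
        subst hmN2
        rw [if_pos hN, if_neg (by omega), if_neg (by omega), hPnN]
        rw [hPn_ne (m-1) (by omega)]
        rw [hdN]
        obtain ⟨K, rfl⟩ : ∃ K, m = K + 1 := ⟨m - 1, by omega⟩
        simp only [Nat.add_sub_cancel]
        rcases Nat.eq_zero_or_pos K with hK0 | hK1
        · -- N = 1
          subst hK0
          have hlameq : lam = b 1 + d 0 := by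
            have := hflam
            norm_num [fB, pseq] at this
            linarith
          have hc1 : c = 1 := by rw [hcdef]; simp [hp0]
          rw [hc1, hp0, hlameq, hd0]
          ring
        · -- N ≥ 2
          obtain ⟨M, rfl⟩ : ∃ M, K = M + 1 := ⟨K - 1, by omega⟩
          have hfl := flux (M+2) b d hd lam M (by omega)
          have hfG : b (M+1) * p M - (b (M+2) + d (M+1) - lam) * p (M+1) = 0 := by
            have := hflam
            unfold fB at this
            rw [if_pos (by omega)] at this
            simpa using this
          have hcval : c = (∑ x ∈ Finset.range (M+1), p x) + p (M+1) := by
            rw [hcdef, Finset.sum_range_succ]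
          rw [hcval]
          have hfl' : d (M+1) * p (M+1) - b (M+1) * p M
              = -lam * ∑ x ∈ Finset.range (M+1), p x := hfl
          rw [show M+1+1 = M+2 from rfl]
          have hS : (∑ x ∈ Finset.range (M+1), p x) + p (M+1) ≠ 0 := by
            rw [← hcval]; exact hcne
          field_simp
          linear_combination - hfl' - hfG

end BDaux
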